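/- In the one-dimensional split framework with uniform density p(u) = 1/(b − a), let c_k = (1/(b − a))·∫_a^b g(s)·e^{−2πik(s−a)/(b−a)} ds for k ∈ ℤ be the Fourier coefficients of g on [a,b]. Then every best split s* satisfies Δ(s*) ≥ π^{−2}·Σ_{k ∈ ℤ, k ≠ 0} |c_k|²/k². -/

import Mathlib

open MeasureTheory Set Real

noncomputable section

namespace RegressionTree19

/-- Impurity decrease on the node `[a,b]` for the uniform density `1/(b−a)` and
partial dependence function `g`:
`Δ(s) = (M(s) − M(b)P(s))²/(P(s)(1 − P(s)))` with `P(s) = (s−a)/(b−a)` and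
`M(s) = ∫_a^s g(u)/(b−a) du` (and `Δ(a) = Δ(b) = 0`). -/
def uniformDelta (a b : ℝ) (g : ℝ → ℝ) (s : ℝ) : ℝ :=
  ((∫ u in a..s, g u / (b - a)) - (∫ u in a..b, g u / (b - a)) * ((s - a) / (b - a))) ^ 2 /
    ((s - a) / (b - a) * (1 - (s - a) / (b - a)))

lemma liftIoc_eq_liftIco {p : ℝ} [hp : Fact (0 < p)] (a : ℝ) (f : ℝ → ℂ)
    (h : f a = f (a + p)) :
    AddCircle.liftIoc p a f = AddCircle.liftIco p a f := by
  funext z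
  obtain ⟨y, hy, rfl⟩ : ∃ y, y ∈ Ico a (a + p) ∧ (y : AddCircle p) = z := by
    let w := AddCircle.equivIco p a z
    exact ⟨w.1, w.2, (AddCircle.equivIco p a).symm_apply_apply z⟩
  rw [AddCircle.liftIco_coe_apply hy]
  rcases eq_or_lt_of_le hy.1 with h1 | h1
  · rw [← h1]
    have h2 : ((a : ℝ) : AddCircle p) = ((a + p : ℝ) : AddCircle p) :=
      (AddCircle.coe_add_period p a).symm
    rw [h2, AddCircle.liftIoc_coe_apply ⟨by linarith [hp.out], le_refl _⟩, ← h, h1]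
  · exact AddCircle.liftIoc_coe_apply ⟨h1, hy.2.le⟩

lemma fourierCoeffOn_const' {a b : ℝ} (hab : a < b) (z : ℂ) {n : ℤ} (hn : n ≠ 0) :
    fourierCoeffOn hab (fun _ => z) n = 0 := by
  haveI : Fact (0 < b - a) := ⟨by linarith⟩
  rw [fourierCoeffOn_eq_integral]
  have hint : ∫ x in a..b, (fourier (-n) (x : AddCircle (b - a)) : ℂ) = 0 := by
    have hd := fun x => has_antideriv_at_fourier_neg (inferInstance : Fact (0 < b - a)) hn x
    rw [intervalIntegral.integral_eq_sub_of_hasDerivAt (fun x _ => hd x)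
      (((map_continuous (fourier (-n))).comp (AddCircle.continuous_mk' _)).intervalIntegrable _ _)]
    have s2 : ((b : ℝ) : AddCircle (b - a)) = ((a : ℝ) : AddCircle (b - a)) := by
      simpa using AddCircle.coe_add_period (b - a) a
    rw [s2, sub_self]
  simp only [smul_eq_mul]
  rw [intervalIntegral.integral_mul_const, hint, zero_mul, smul_zero]

/-- With the uniform density on `[a,b]` and Fourier coefficients
`c_k = (1/(b−a))∫_a^b g(s)e^{−2πik(s−a)/(b−a)} ds`, every best split `s*` satisfies
`Δ(s*) ≥ π^{−2} Σ_{k≠0} |c_k|²/k²`. -/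
theorem fourier_impurity_lower_bound
    (a b : ℝ) (hab : a < b)
    (g : ℝ → ℝ) (hg_cont : ContinuousOn g (Set.Icc a b))
    (c : ℤ → ℂ)
    (hc : ∀ k : ℤ, c k = (1 / (b - a) : ℝ) * ∫ s in a..b, (g s : ℂ) *
      Complex.exp (((-2 * π * (k : ℝ) * (s - a) / (b - a) : ℝ) : ℂ) * Complex.I))
    (sstar : ℝ) (hmem : sstar ∈ Set.Icc a b)
    (hmax : ∀ s ∈ Set.Icc a b, uniformDelta a b g s ≤ uniformDelta a b g sstar) :
    (π ^ 2)⁻¹ * ∑' k : ℤ, (if k = 0 then 0 else ‖c k‖ ^ 2 / (k : ℝ) ^ 2) ≤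
      uniformDelta a b g sstar := by
  have hL : (0:ℝ) < b - a := by linarith
  haveI : Fact (0 < b - a) := ⟨hL⟩
  set G : ℝ → ℝ := fun x => g (max a (min x b)) with hGdef
  have hGcont : Continuous G := by
    apply hg_cont.comp_continuous
    · exact continuous_const.max (continuous_id.min continuous_const)
    · intro x
      exact ⟨le_max_left _ _, max_le hab.le (min_le_right _ _)⟩
  have hGg : ∀ x ∈ Icc a b, G x = g x := by
    intro x hx
    simp only [hGdef]
    rw [min_eq_left hx.2, max_eq_right hx.1]
  set m : ℝ := (∫ u in a..b, G u) / (b - a) with hmdef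
  set Φ : ℝ → ℝ := fun s => ∫ u in a..s, (G u - m) with hΦdef
  have hGmc : Continuous (fun u => G u - m) := hGcont.sub continuous_const
  have hΦd : ∀ x : ℝ, HasDerivAt Φ (G x - m) x := fun x =>
    (hGmc.integral_hasStrictDerivAt a x).hasDerivAt
  have hΦcont : Continuous Φ := continuous_iff_continuousAt.2 fun x => (hΦd x).continuousAt
  have hΦa : Φ a = 0 := intervalIntegral.integral_same
  have hΦb : Φ b = 0 := by
    simp only [hΦdef]
    rw [intervalIntegral.integral_sub (hGcont.intervalIntegrable _ _)
      (intervalIntegrable_const), intervalIntegral.integral_const, smul_eq_mul, hmdef]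
    field_simp
    ring
  -- Part 1 : the averaged impurity bound
  have hΔ0 : 0 ≤ uniformDelta a b g sstar := by
    refine le_trans ?_ (hmax ((a+b)/2) ⟨by linarith, by linarith⟩)
    apply div_nonneg (sq_nonneg _)
    have ht : ((a+b)/2 - a) / (b - a) = 1/2 := by field_simp; ring
    rw [ht]; norm_num
  have hΦformula : ∀ s ∈ Icc a b,
      (∫ u in a..s, g u / (b - a)) - (∫ u in a..b, g u / (b - a)) * ((s - a) / (b - a))
        = Φ s / (b - a) := by
    intro s hs
    have e1 : ∀ t ∈ Icc a b, (∫ u in a..t, g u / (b - a)) = (∫ u in a..t, G u) / (b - a) := by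
      intro t ht
      rw [intervalIntegral.integral_div]
      congr 1
      apply intervalIntegral.integral_congr
      intro x hx
      rw [uIcc_of_le ht.1] at hx
      exact (hGg x ⟨hx.1, le_trans hx.2 ht.2⟩).symm
    rw [e1 s hs, e1 b ⟨hab.le, le_refl b⟩]
    have e2 : Φ s = (∫ u in a..s, G u) - (s - a) * m := by
      simp only [hΦdef]
      rw [intervalIntegral.integral_sub (hGcont.intervalIntegrable _ _)
        (intervalIntegrable_const), intervalIntegral.integral_const, smul_eq_mul]
    rw [e2, hmdef]
    field_simp
  have key1 : ∀ s ∈ Icc a b, 4 / (b-a)^2 * (Φ s)^2 ≤ uniformDelta a b g sstar := by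
    intro s hs
    rcases eq_or_lt_of_le hs.1 with h1 | h1
    · rw [← h1, hΦa]; simpa using hΔ0
    rcases eq_or_lt_of_le hs.2 with h2 | h2
    · rw [h2, hΦb]; simpa using hΔ0
    refine le_trans ?_ (hmax s hs)
    rw [uniformDelta, hΦformula s hs]
    set q : ℝ := (s - a) / (b - a) * (1 - (s - a) / (b - a)) with hqdef
    have ht0 : 0 < (s - a) / (b - a) := div_pos (by linarith) hL
    have ht1 : (s - a) / (b - a) < 1 := by
      rw [div_lt_one hL]; linarith
    have hq0 : 0 < q := mul_pos ht0 (by linarith)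
    have hq4 : q ≤ 1/4 := by nlinarith [sq_nonneg ((s - a)/(b - a) - 1/2)]
    rw [le_div_iff₀ hq0, div_pow]
    have hx : 0 ≤ (Φ s)^2 / (b - a)^2 := by positivity
    have he : 4 / (b-a)^2 * (Φ s)^2 * q = 4 * ((Φ s)^2 / (b - a)^2) * q := by ring
    rw [he]
    nlinarith [mul_nonneg hx (by linarith : (0:ℝ) ≤ 1 - 4*q)]
  have key2 : 4 / (b-a)^3 * (∫ s in a..b, (Φ s)^2) ≤ uniformDelta a b g sstar := by
    have h1 : ∫ s in a..b, 4 / (b-a)^2 * (Φ s)^2 ≤ ∫ _ in a..b, uniformDelta a b g sstar := by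
      apply intervalIntegral.integral_mono_on hab.le
      · exact ((continuous_const.mul (hΦcont.pow 2)).intervalIntegrable _ _)
      · exact intervalIntegrable_const
      · exact key1
    rw [intervalIntegral.integral_const, smul_eq_mul, intervalIntegral.integral_const_mul] at h1
    rw [div_mul_eq_mul_div, div_le_iff₀ (by positivity : (0:ℝ) < (b-a)^3)]
    rw [div_mul_eq_mul_div, div_le_iff₀ (by positivity : (0:ℝ) < (b-a)^2)] at h1
    nlinarith [h1]
  -- Part 2 : Fourier coefficients
  have hphase : ∀ n : ℤ, c n
      = Complex.exp (((2 * π * n * a / (b - a) : ℝ) : ℂ) * Complex.I)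
        * fourierCoeffOn hab (fun x : ℝ => ((G x : ℝ) : ℂ)) n := by
    intro n
    rw [hc n, fourierCoeffOn_eq_integral]
    rw [Complex.real_smul, mul_left_comm]
    congr 1
    rw [← intervalIntegral.integral_const_mul]
    apply intervalIntegral.integral_congr
    intro x hx
    rw [uIcc_of_le hab.le] at hx
    simp only [smul_eq_mul, fourier_coe_apply]
    rw [← hGg x hx]
    rw [mul_comm ((G x : ℝ) : ℂ), ← mul_assoc, ← Complex.exp_add]
    congr 2
    push_cast
    ring
  have habs_c : ∀ n : ℤ, ‖c n‖
      = ‖fourierCoeffOn hab (fun x : ℝ => ((G x : ℝ) : ℂ)) n‖ := by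
    intro n
    rw [hphase n, norm_mul]
    rw [Complex.norm_exp_ofReal_mul_I, one_mul]
  have hsub : ∀ n : ℤ, n ≠ 0 → fourierCoeffOn hab (fun x => ((G x - m : ℝ) : ℂ)) n
      = fourierCoeffOn hab (fun x : ℝ => ((G x : ℝ) : ℂ)) n := by
    intro n hn
    have hf1 : Continuous fun x : ℝ =>
        (fourier (-n) (x : AddCircle (b - a)) : ℂ) * ((G x : ℝ) : ℂ) :=
      (((map_continuous (fourier (-n))).comp (AddCircle.continuous_mk' _))).mul
        (Complex.continuous_ofReal.comp hGcont)
    have hf2 : Continuous fun x : ℝ =>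
        (fourier (-n) (x : AddCircle (b - a)) : ℂ) * ((m : ℝ) : ℂ) :=
      (((map_continuous (fourier (-n))).comp (AddCircle.continuous_mk' _))).mul continuous_const
    have h1 : fourierCoeffOn hab (fun x => ((G x - m : ℝ) : ℂ)) n
        = fourierCoeffOn hab (fun x : ℝ => ((G x : ℝ) : ℂ)) n
          - fourierCoeffOn hab (fun _ => ((m : ℝ) : ℂ)) n := by
      rw [fourierCoeffOn_eq_integral, fourierCoeffOn_eq_integral, fourierCoeffOn_eq_integral,
        ← smul_sub]
      congr 1
      simp only [smul_eq_mul]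
      rw [← intervalIntegral.integral_sub (hf1.intervalIntegrable _ _)
          (hf2.intervalIntegrable _ _)]
      apply intervalIntegral.integral_congr
      intro x _
      push_cast
      ring
    rw [h1, fourierCoeffOn_const' hab _ hn, sub_zero]
  have hIBP : ∀ n : ℤ, n ≠ 0 → ‖fourierCoeffOn hab (fun s : ℝ => ((Φ s : ℝ) : ℂ)) n‖
      = (b - a) * ‖c n‖ / (2 * π * |(n : ℝ)|) := by
    intro n hn
    have hderiv : ∀ x ∈ Ioo (min a b) (max a b),
        HasDerivAt (fun s : ℝ => ((Φ s : ℝ) : ℂ)) (((G x - m : ℝ) : ℂ)) x :=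
      fun x _ => (hΦd x).ofReal_comp
    have hibp := fourierCoeffOn_of_hasDerivAt_Ioo hab hn
      ((Complex.continuous_ofReal.comp hΦcont).continuousOn) hderiv
      ((Complex.continuous_ofReal.comp hGmc).intervalIntegrable _ _)
    simp only [Function.comp_def] at hibp
    rw [hΦa, hΦb, hsub n hn] at hibp
    simp only [Complex.ofReal_zero, sub_zero, mul_zero, zero_sub] at hibp
    rw [hibp]
    rw [norm_mul, norm_neg, norm_mul]
    have e1 : ‖(1 : ℂ) / (-2 * ↑π * Complex.I * ↑n)‖ = 1 / (2 * π * |(n : ℝ)|) := by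
      rw [norm_div, norm_one]
      congr 1
      simp only [norm_mul, Complex.norm_I, Complex.norm_real, Real.norm_eq_abs]
      rw [abs_of_pos pi_pos]
      norm_num
    have e2 : ‖((b : ℂ) - (a : ℂ))‖ = b - a := by
      rw [← Complex.ofReal_sub, Complex.norm_real, Real.norm_eq_abs, abs_of_pos hL]
    rw [e1, e2, habs_c n]
    ring
  -- Part 3 : Parseval
  set Φc : ℝ → ℂ := fun s => ((Φ s : ℝ) : ℂ) with hΦcdef
  set F : AddCircle (b - a) → ℂ := AddCircle.liftIoc (b - a) a Φc with hFdef
  have hend : Φc a = Φc (a + (b - a)) := by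
    simp only [hΦcdef]
    rw [show a + (b - a) = b by ring, hΦa, hΦb]
  have hFx : ∀ x ∈ Icc a b, F ↑x = Φc x := by
    intro x hx
    rcases eq_or_lt_of_le hx.1 with h1 | h1
    · rw [← h1, hFdef]
      have h2 : ((a : ℝ) : AddCircle (b - a)) = ((a + (b - a) : ℝ) : AddCircle (b - a)) :=
        (AddCircle.coe_add_period _ a).symm
      rw [h2, AddCircle.liftIoc_coe_apply ⟨by linarith, le_refl _⟩, ← hend]
    · exact AddCircle.liftIoc_coe_apply ⟨h1, by linarith [hx.2]⟩
  have hFcoeff : ∀ n : ℤ, fourierCoeff F n = fourierCoeffOn hab Φc n := by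
    intro n
    rw [fourierCoeff_eq_intervalIntegral F n a, fourierCoeffOn_eq_integral,
      show a + (b - a) = b by ring]
    congr 1
    apply intervalIntegral.integral_congr
    intro x hx
    rw [uIcc_of_le hab.le] at hx
    simp only [hFx x hx]
  have hFIco : F = AddCircle.liftIco (b - a) a Φc := liftIoc_eq_liftIco a Φc hend
  have hFcont : Continuous F := by
    rw [hFIco]
    exact AddCircle.liftIco_continuous hend
      ((Complex.continuous_ofReal.comp hΦcont).continuousOn)
  have hFmem : MemLp F 2 AddCircle.haarAddCircle :=
    hFcont.memLp_of_hasCompactSupport (HasCompactSupport.of_compactSpace F)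
  set fL : Lp ℂ 2 (@AddCircle.haarAddCircle (b - a) _) := hFmem.toLp F with hfLdef
  have hae : ⇑fL =ᵐ[AddCircle.haarAddCircle] F := hFmem.coeFn_toLp
  have hcoeq : ∀ n : ℤ, fourierCoeff (⇑fL) n = fourierCoeff F n := by
    intro n
    unfold fourierCoeff
    apply integral_congr_ae
    filter_upwards [hae] with t ht
    rw [ht]
  have hsumm : Summable (fun i : ℤ => ‖fourierCoeffOn hab Φc i‖ ^ 2) := by
    have h1 := (lp.memℓp (fourierBasis.repr fL)).summable
      (by norm_num : 0 < (2 : ENNReal).toReal)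
    refine h1.congr fun i => ?_
    rw [fourierBasis_repr fL i, hcoeq i, hFcoeff i]
    norm_num
  have hInt : ∫ t, ‖fL t‖ ^ 2 ∂AddCircle.haarAddCircle
      = (1 / (b - a)) * ∫ s in a..b, (Φ s) ^ 2 := by
    have e1 : ∫ t, ‖fL t‖ ^ 2 ∂AddCircle.haarAddCircle
        = ∫ t, ‖F t‖ ^ 2 ∂AddCircle.haarAddCircle := by
      apply integral_congr_ae
      filter_upwards [hae] with t ht
      rw [ht]
    have e2 : ∫ x in a..(a + (b - a)), ‖F x‖ ^ 2
        = ∫ t : AddCircle (b - a), ‖F t‖ ^ 2 :=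
      AddCircle.intervalIntegral_preimage (b - a) a (fun t => ‖F t‖ ^ 2)
    have e3 : ∫ t : AddCircle (b - a), ‖F t‖ ^ 2
        = (b - a) * ∫ t, ‖F t‖ ^ 2 ∂AddCircle.haarAddCircle := by
      rw [AddCircle.volume_eq_smul_haarAddCircle, integral_smul_measure,
        ENNReal.toReal_ofReal hL.le, smul_eq_mul]
    have e4 : ∫ x in a..(a + (b - a)), ‖F x‖ ^ 2 = ∫ s in a..b, (Φ s) ^ 2 := by
      rw [show a + (b - a) = b by ring]
      apply intervalIntegral.integral_congr
      intro x hx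
      rw [uIcc_of_le hab.le] at hx
      simp only [hFx x hx, hΦcdef]
      rw [Complex.norm_real, Real.norm_eq_abs, sq_abs]
    rw [e1, ← e4, e2, e3, ← mul_assoc, one_div_mul_cancel hL.ne', one_mul]
  have hPar : ∑' i : ℤ, ‖fourierCoeffOn hab Φc i‖ ^ 2
      = (1 / (b - a)) * ∫ s in a..b, (Φ s) ^ 2 := by
    rw [← hInt, ← tsum_sq_fourierCoeff fL]
    exact tsum_congr fun i => by rw [hcoeq i, hFcoeff i]
  -- Part 4 : combination
  have hpt : ∀ k : ℤ, (π^2)⁻¹ * (if k = 0 then 0 else ‖c k‖ ^ 2 / (k : ℝ) ^ 2)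
      ≤ 4 / (b-a)^2 * ‖fourierCoeffOn hab Φc k‖ ^ 2 := by
    intro k
    by_cases hk : k = 0
    · rw [if_pos hk, mul_zero]
      positivity
    · rw [if_neg hk]
      apply le_of_eq
      rw [hIBP k hk]
      have hk0 : (k:ℝ) ≠ 0 := Int.cast_ne_zero.2 hk
      have hk2 : |(k:ℝ)| ^ 2 = (k:ℝ) ^ 2 := sq_abs _
      rw [div_pow, mul_pow, mul_pow, mul_pow, hk2]
      have hπ : (π:ℝ) ≠ 0 := pi_ne_zero
      field_simp
      ring
  have hsum2 : Summable (fun k : ℤ => 4 / (b-a)^2 * ‖fourierCoeffOn hab Φc k‖ ^ 2) :=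
    hsumm.mul_left _
  have hsum1 : Summable (fun k : ℤ =>
      (π^2)⁻¹ * (if k = 0 then 0 else ‖c k‖ ^ 2 / (k : ℝ) ^ 2)) := by
    apply Summable.of_nonneg_of_le _ hpt hsum2
    intro k
    apply mul_nonneg (by positivity)
    split
    · exact le_rfl
    · positivity
  calc (π ^ 2)⁻¹ * ∑' k : ℤ, (if k = 0 then 0 else ‖c k‖ ^ 2 / (k : ℝ) ^ 2)
      = ∑' k : ℤ, (π^2)⁻¹ * (if k = 0 then 0 else ‖c k‖ ^ 2 / (k : ℝ) ^ 2) :=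
        (tsum_mul_left).symm
    _ ≤ ∑' k : ℤ, 4 / (b-a)^2 * ‖fourierCoeffOn hab Φc k‖ ^ 2 :=
        Summable.tsum_le_tsum hpt hsum1 hsum2
    _ = 4 / (b-a)^2 * ((1 / (b - a)) * ∫ s in a..b, (Φ s) ^ 2) := by
        rw [tsum_mul_left, hPar]
    _ = 4 / (b-a)^3 * (∫ s in a..b, (Φ s) ^ 2) := by
        rw [← mul_assoc, div_mul_div_comm, mul_one, ← pow_succ]
    _ ≤ uniformDelta a b g sstar := key2

end RegressionTree19
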